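/- Let E ⊂ ℝⁿ be finite, Γ⃗₀ a shape field on E with l-th refinements Γ⃗_l, and M₀ > 0. With Γ(x,S) and Γ_l^{fp}(x,M₀) = ⋂_{S⊆E, #(S)≤(D+2)^l} Γ(x,S) defined as below, we have Γ_l^{fp}(x, M₀) ⊆ Γ_l(x, M₀) for every x ∈ E and l ≥ 0. -/
import Mathlib


noncomputable section

/-- Iterated partial derivative `∂^β` of a multivariate polynomial. -/
def pdiff {n : ℕ} (β : Fin n → ℕ) (P : MvPolynomial (Fin n) ℝ) :
    MvPolynomial (Fin n) ℝ :=
  (List.finRange n).foldr (fun i Q => (fun R => MvPolynomial.pderiv i R)^[β i] Q) P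

/-- `∂^β P` evaluated at a point of Euclidean space. -/
def pdEval {n : ℕ} (β : Fin n → ℕ) (P : MvPolynomial (Fin n) ℝ)
    (x : EuclideanSpace ℝ (Fin n)) : ℝ :=
  MvPolynomial.eval (fun i => x i) (pdiff β P)

/-- `Γ` is a shape field on `E`. -/
def ShapeField (m n : ℕ) (E : Set (EuclideanSpace ℝ (Fin n)))
    (Γ : EuclideanSpace ℝ (Fin n) → ℝ → Set (MvPolynomial (Fin n) ℝ)) : Prop :=
  ∀ x ∈ E, ∀ M : ℝ, 0 < M → Convex ℝ (Γ x M) ∧ (∀ P ∈ Γ x M, P.totalDegree ≤ m - 1) ∧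
    ∀ M' : ℝ, 0 < M' → M' ≤ M → Γ x M' ⊆ Γ x M

/-- The first refinement `Γ#` of a shape field `Γ`. -/
def refineOnce (m n : ℕ) (E : Set (EuclideanSpace ℝ (Fin n)))
    (Γ : EuclideanSpace ℝ (Fin n) → ℝ → Set (MvPolynomial (Fin n) ℝ)) :
    EuclideanSpace ℝ (Fin n) → ℝ → Set (MvPolynomial (Fin n) ℝ) :=
  fun x M => {Ps | Ps.totalDegree ≤ m - 1 ∧ ∀ y ∈ E, ∃ P ∈ Γ y M,
    ∀ β : Fin n → ℕ, (∑ i, β i) ≤ m - 1 →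
      |pdEval β (Ps - P) x| ≤ M * dist x y ^ (m - ∑ i, β i)}

/-- The `l`-th refinement of a shape field. -/
def refineN (m n : ℕ) (E : Set (EuclideanSpace ℝ (Fin n)))
    (Γ : EuclideanSpace ℝ (Fin n) → ℝ → Set (MvPolynomial (Fin n) ℝ)) :
    ℕ → EuclideanSpace ℝ (Fin n) → ℝ → Set (MvPolynomial (Fin n) ℝ)
  | 0 => Γ
  | l + 1 => refineOnce m n E (refineN m n E Γ l)

/-- The Whitney seminorm bound: `‖(P^y)_{y ∈ T}‖_{Ċ^m(T)} ≤ M₀`. -/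
def WhitneyNormLE (m n : ℕ) (M₀ : ℝ) (T : Set (EuclideanSpace ℝ (Fin n)))
    (P : EuclideanSpace ℝ (Fin n) → MvPolynomial (Fin n) ℝ) : Prop :=
  ∀ z ∈ T, ∀ w ∈ T, z ≠ w → ∀ α : Fin n → ℕ, (∑ i, α i) ≤ m →
    |pdEval α (P z - P w) z| ≤ M₀ * dist z w ^ (m - ∑ i, α i)

/-- `Γ(x, S)`: the set of `P^x ∈ 𝒫` arising from Whitney fields
`(P^y)_{y ∈ S ∪ {x}}` of `Ċ^m`-seminorm at most `M₀` with `P^y ∈ Γ₀(y, M₀)`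
for all `y ∈ S ∪ {x}`. -/
def GammaS (m n : ℕ) (Γ₀ : EuclideanSpace ℝ (Fin n) → ℝ → Set (MvPolynomial (Fin n) ℝ))
    (M₀ : ℝ) (x : EuclideanSpace ℝ (Fin n)) (S : Set (EuclideanSpace ℝ (Fin n))) :
    Set (MvPolynomial (Fin n) ℝ) :=
  {Px | ∃ P : EuclideanSpace ℝ (Fin n) → MvPolynomial (Fin n) ℝ,
    P x = Px ∧
    (∀ y ∈ S ∪ {x}, (P y).totalDegree ≤ m - 1 ∧ P y ∈ Γ₀ y M₀) ∧
    WhitneyNormLE m n M₀ (S ∪ {x}) P}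

/-! Auxiliary lemmas -/

lemma iter_pderiv_add {n : ℕ} (i : Fin n) (k : ℕ) (P Q : MvPolynomial (Fin n) ℝ) :
    (fun R => MvPolynomial.pderiv i R)^[k] (P + Q)
      = (fun R => MvPolynomial.pderiv i R)^[k] P + (fun R => MvPolynomial.pderiv i R)^[k] Q := by
  induction k generalizing P Q with
  | zero => simp
  | succ k ih => simp [Function.iterate_succ_apply, map_add, ih]

lemma iter_pderiv_smul {n : ℕ} (i : Fin n) (k : ℕ) (c : ℝ) (P : MvPolynomial (Fin n) ℝ) :
    (fun R => MvPolynomial.pderiv i R)^[k] (c • P)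
      = c • (fun R => MvPolynomial.pderiv i R)^[k] P := by
  induction k generalizing P with
  | zero => simp
  | succ k ih => simp [Function.iterate_succ_apply, map_smul, ih]

lemma pdiff_add {n : ℕ} (β : Fin n → ℕ) (P Q : MvPolynomial (Fin n) ℝ) :
    pdiff β (P + Q) = pdiff β P + pdiff β Q := by
  unfold pdiff
  induction List.finRange n generalizing P Q with
  | nil => simp
  | cons a L ih => simp only [List.foldr_cons, ih, iter_pderiv_add]

lemma pdiff_smul {n : ℕ} (β : Fin n → ℕ) (c : ℝ) (P : MvPolynomial (Fin n) ℝ) :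
    pdiff β (c • P) = c • pdiff β P := by
  unfold pdiff
  induction List.finRange n generalizing P with
  | nil => simp
  | cons a L ih => simp only [List.foldr_cons, ih, iter_pderiv_smul]

lemma pdEval_add {n : ℕ} (β : Fin n → ℕ) (P Q : MvPolynomial (Fin n) ℝ)
    (x : EuclideanSpace ℝ (Fin n)) : pdEval β (P + Q) x = pdEval β P x + pdEval β Q x := by
  simp [pdEval, pdiff_add]

lemma pdEval_smul {n : ℕ} (β : Fin n → ℕ) (c : ℝ) (P : MvPolynomial (Fin n) ℝ)
    (x : EuclideanSpace ℝ (Fin n)) : pdEval β (c • P) x = c * pdEval β P x := by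
  unfold pdEval
  rw [pdiff_smul, MvPolynomial.smul_eq_C_mul, map_mul, MvPolynomial.eval_C]

lemma pdEval_zero {n : ℕ} (β : Fin n → ℕ) (x : EuclideanSpace ℝ (Fin n)) :
    pdEval β (0 : MvPolynomial (Fin n) ℝ) x = 0 := by
  have := pdEval_smul β 0 0 x
  simpa using this

lemma abs_comb {a b u v C : ℝ} (ha : 0 ≤ a) (hb : 0 ≤ b) (hab : a + b = 1)
    (hu : |u| ≤ C) (hv : |v| ≤ C) : |a * u + b * v| ≤ C := by
  calc |a * u + b * v| ≤ |a * u| + |b * v| := abs_add_le _ _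
    _ = a * |u| + b * |v| := by rw [abs_mul, abs_mul, abs_of_nonneg ha, abs_of_nonneg hb]
    _ ≤ a * C + b * C := add_le_add (mul_le_mul_of_nonneg_left hu ha)
        (mul_le_mul_of_nonneg_left hv hb)
    _ = C := by rw [← add_mul, hab, one_mul]

lemma gammaS_convex {m n : ℕ} {E : Set (EuclideanSpace ℝ (Fin n))}
    {Γ₀ : EuclideanSpace ℝ (Fin n) → ℝ → Set (MvPolynomial (Fin n) ℝ)}
    (hsf : ShapeField m n E Γ₀) {M₀ : ℝ} (hM₀ : 0 < M₀)
    {y : EuclideanSpace ℝ (Fin n)} (hy : y ∈ E)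
    {S : Set (EuclideanSpace ℝ (Fin n))} (hS : S ⊆ E) :
    Convex ℝ (GammaS m n Γ₀ M₀ y S) := by
  rintro p ⟨Pf, hp, hmemP, hWP⟩ q ⟨Qf, hq, hmemQ, hWQ⟩ a b ha hb hab
  refine ⟨fun z => a • Pf z + b • Qf z, show a • Pf y + b • Qf y = _ by rw [hp, hq],
    fun z hz => ?_,
    fun z hz w hw hzw α hα => ?_⟩
  · have hzE : z ∈ E := by
      rcases hz with hz | hz
      · exact hS hz
      · rw [Set.mem_singleton_iff] at hz; subst hz; exact hy
    refine ⟨le_trans (MvPolynomial.totalDegree_add _ _) (max_le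
      (le_trans (MvPolynomial.totalDegree_smul_le _ _) (hmemP z hz).1)
      (le_trans (MvPolynomial.totalDegree_smul_le _ _) (hmemQ z hz).1)), ?_⟩
    exact (hsf z hzE M₀ hM₀).1 (hmemP z hz).2 (hmemQ z hz).2 ha hb hab
  · have key : (a • Pf z + b • Qf z) - (a • Pf w + b • Qf w)
        = a • (Pf z - Pf w) + b • (Qf z - Qf w) := by module
    rw [key, pdEval_add, pdEval_smul, pdEval_smul]
    exact abs_comb ha hb hab (hWP z hz w hw hzw α hα) (hWQ z hz w hw hzw α hα)

/-- Lemma 10.2: `Γ_l^{fp}(x, M₀) ⊆ Γ_l(x, M₀)` for all `x ∈ E` and `l ≥ 0`,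
where `Γ_l^{fp}(x, M₀) = ⋂_{S ⊆ E, #(S) ≤ (D+2)^l} Γ(x, S)` and `Γ_l` is the
`l`-th refinement of `Γ₀`, with `D = dim 𝒫`. -/
theorem fp_intersection_subset_refinement (m n : ℕ) (hm : 0 < m) (hn : 0 < n)
    (E : Set (EuclideanSpace ℝ (Fin n))) (hE : E.Finite)
    (Γ₀ : EuclideanSpace ℝ (Fin n) → ℝ → Set (MvPolynomial (Fin n) ℝ))
    (hsf : ShapeField m n E Γ₀)
    (M₀ : ℝ) (hM₀ : 0 < M₀)
    (D : ℕ) (hD : D = Module.finrank ℝ (MvPolynomial.restrictTotalDegree (Fin n) ℝ (m - 1))) :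
    ∀ x ∈ E, ∀ l : ℕ, ∀ Px : MvPolynomial (Fin n) ℝ,
      (∀ S : Set (EuclideanSpace ℝ (Fin n)), S ⊆ E → S.ncard ≤ (D + 2) ^ l →
        Px ∈ GammaS m n Γ₀ M₀ x S) →
      Px ∈ refineN m n E Γ₀ l x M₀ := by
  classical
  suffices H : ∀ l : ℕ, ∀ x ∈ E, ∀ Px : MvPolynomial (Fin n) ℝ,
      (∀ S : Set (EuclideanSpace ℝ (Fin n)), S ⊆ E → S.ncard ≤ (D + 2) ^ l →
        Px ∈ GammaS m n Γ₀ M₀ x S) → Px ∈ refineN m n E Γ₀ l x M₀ by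
    exact fun x hx l Px h => H l x hx Px h
  intro l
  induction l with
  | zero =>
    intro x hx Px h
    obtain ⟨P, hPx, hmem, -⟩ := h ∅ (by simp) (by simp)
    have h2 := (hmem x (by simp)).2
    rwa [hPx] at h2
  | succ l ih =>
    intro x hx Px h
    have hpowle : (D + 2) ^ l ≤ (D + 2) ^ (l + 1) :=
      Nat.pow_le_pow_right (by omega) (by omega)
    simp only [refineN, refineOnce, Set.mem_setOf_eq]
    constructor
    · obtain ⟨P, hPx, hmem, -⟩ := h ∅ (by simp) (by simp)
      have h1 := (hmem x (by simp)).1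
      rwa [hPx] at h1
    · intro y hy
      by_cases hxy : y = x
      · subst hxy
        refine ⟨Px, ih y hy Px (fun S hS hc => h S hS (hc.trans hpowle)), fun β hβ => ?_⟩
        simp only [sub_self, pdEval_zero, abs_zero, dist_self]
        have hk : m - (∑ i, β i) ≠ 0 := by omega
        rw [zero_pow hk, mul_zero]
      · -- Helly's theorem argument
        set V := MvPolynomial.restrictTotalDegree (Fin n) ℝ (m - 1) with hV
        have hrank : Module.finrank ℝ V = D := hD.symm
        set B : Set (MvPolynomial (Fin n) ℝ) :=
          {Q | ∀ β : Fin n → ℕ, (∑ i, β i) ≤ m - 1 →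
            |pdEval β (Px - Q) x| ≤ M₀ * dist x y ^ (m - ∑ i, β i)} with hBdef
        have hBconv : Convex ℝ B := by
          intro p hp q hq a b ha hb hab
          intro β hβ
          have h1 : a • Px + b • Px = Px := by rw [← add_smul, hab, one_smul]
          have key : Px - (a • p + b • q) = a • (Px - p) + b • (Px - q) := by
            have h2 : a • (Px - p) + b • (Px - q) = (a + b) • Px - (a • p + b • q) := by
              module
            rw [h2, hab, one_smul]
          rw [key, pdEval_add, pdEval_smul, pdEval_smul]
          exact abs_comb ha hb hab (hp β hβ) (hq β hβ)
        set F : Finset (EuclideanSpace ℝ (Fin n)) → Set V :=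
          fun T => Subtype.val ⁻¹' (GammaS m n Γ₀ M₀ y ↑T ∩ B) with hFdef
        set s : Finset (Finset (EuclideanSpace ℝ (Fin n))) :=
          hE.toFinset.powerset.filter (fun T => T.card ≤ (D + 2) ^ l) with hsdef
        have hmemS : ∀ T ∈ s, ↑T ⊆ E ∧ T.card ≤ (D + 2) ^ l := by
          intro T hT
          rw [hsdef, Finset.mem_filter, Finset.mem_powerset] at hT
          exact ⟨fun z hz => hE.mem_toFinset.mp (hT.1 hz), hT.2⟩
        have hinter : (⋂ T ∈ s, F T).Nonempty := by
          apply Convex.helly_theorem' (𝕜 := ℝ)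
          · intro T hT
            exact ((gammaS_convex hsf hM₀ hy (hmemS T hT).1).inter hBconv).linear_preimage
              V.subtype
          · intro I hIs hIcard
            rw [hrank] at hIcard
            set U : Finset (EuclideanSpace ℝ (Fin n)) := I.biUnion id with hUdef
            have hUcard : U.card ≤ (D + 1) * (D + 2) ^ l := by
              calc U.card ≤ ∑ T ∈ I, (id T).card := Finset.card_biUnion_le
                _ ≤ I.card • ((D + 2) ^ l) :=
                    Finset.sum_le_card_nsmul _ _ _ (fun T hT => (hmemS T (hIs hT)).2)
                _ = I.card * (D + 2) ^ l := by rw [smul_eq_mul]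
                _ ≤ (D + 1) * (D + 2) ^ l := Nat.mul_le_mul_right _ hIcard
            have hSsub : (↑U : Set (EuclideanSpace ℝ (Fin n))) ∪ {y} ⊆ E := by
              intro z hz
              rcases hz with hz | hz
              · obtain ⟨T, hTI, hzT⟩ := Finset.mem_biUnion.mp hz
                exact (hmemS T (hIs hTI)).1 hzT
              · rw [Set.mem_singleton_iff] at hz; subst hz; exact hy
            have hScard : ((↑U : Set (EuclideanSpace ℝ (Fin n))) ∪ {y}).ncard
                ≤ (D + 2) ^ (l + 1) := by
              have h1 : 1 ≤ (D + 2) ^ l := Nat.one_le_pow _ _ (by omega)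
              have h2 : ((↑U : Set (EuclideanSpace ℝ (Fin n))) ∪ {y}).ncard ≤ U.card + 1 := by
                have := Set.ncard_union_le (↑U : Set (EuclideanSpace ℝ (Fin n))) {y}
                rwa [Set.ncard_coe_finset, Set.ncard_singleton] at this
              have h3 : (D + 1) * (D + 2) ^ l + 1 ≤ (D + 2) ^ (l + 1) := by
                rw [pow_succ]; nlinarith
              omega
            obtain ⟨P, hPx, hmem, hW⟩ := h ((↑U : Set (EuclideanSpace ℝ (Fin n))) ∪ {y})
              hSsub hScard
            have hyU : y ∈ ((↑U : Set (EuclideanSpace ℝ (Fin n))) ∪ {y}) ∪ {x} := by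
              left; right; rfl
            have hxU : x ∈ ((↑U : Set (EuclideanSpace ℝ (Fin n))) ∪ {y}) ∪ {x} := by
              right; rfl
            have hPydeg : (P y).totalDegree ≤ m - 1 := (hmem y hyU).1
            refine ⟨⟨P y, (MvPolynomial.mem_restrictTotalDegree _ _ _).mpr hPydeg⟩,
              Set.mem_iInter₂.mpr fun T hTI => ?_⟩
            have hTsub : (↑T : Set (EuclideanSpace ℝ (Fin n))) ∪ {y}
                ⊆ ((↑U : Set (EuclideanSpace ℝ (Fin n))) ∪ {y}) ∪ {x} := by
              intro z hz
              rcases hz with hz | hz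
              · left; left
                exact Finset.mem_coe.mpr (Finset.mem_biUnion.mpr ⟨T, hTI, hz⟩)
              · left; right; exact hz
            show P y ∈ GammaS m n Γ₀ M₀ y ↑T ∩ B
            refine ⟨⟨P, rfl, fun z hz => hmem z (hTsub hz),
              fun z hz w hw hzw α hα => hW z (hTsub hz) w (hTsub hw) hzw α hα⟩, ?_⟩
            intro β hβ
            have hb := hW x hxU y hyU (fun hh => hxy hh.symm) β (le_trans hβ (Nat.sub_le m 1))
            rwa [hPx] at hb
        obtain ⟨Q, hQ⟩ := hinter
        rw [Set.mem_iInter₂] at hQ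
        have hempty : (∅ : Finset (EuclideanSpace ℝ (Fin n))) ∈ s := by
          rw [hsdef, Finset.mem_filter, Finset.mem_powerset]
          exact ⟨Finset.empty_subset _, by simp⟩
        have hQB : (Q : MvPolynomial (Fin n) ℝ) ∈ B := (hQ ∅ hempty).2
        refine ⟨(Q : MvPolynomial (Fin n) ℝ), ?_, fun β hβ => hQB β hβ⟩
        apply ih y hy
        intro S hSE hScard
        have hSfin : S.Finite := hE.subset hSE
        have hTmem : hSfin.toFinset ∈ s := by
          rw [hsdef, Finset.mem_filter, Finset.mem_powerset]
          refine ⟨Set.Finite.toFinset_mono hSE, ?_⟩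
          rwa [← Set.ncard_eq_toFinset_card S hSfin]
        have hGm := (hQ _ hTmem).1
        rwa [Set.Finite.coe_toFinset] at hGm

end
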